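/- arXiv:1310.5729 — 2 statements merged into one kernel-verified Lean document; each statement's English description precedes it below -/
import Mathlib

section
/- There exist sets A, B ⊆ ℕ such that the lower density of A equals 1/2, the Banach density of B is at least 8/9, and for every m ∈ ℕ there exists k ∈ ℕ such that the lower density of {x ∈ ℕ : [x, x+k] ⊆ A + B + [0,m]} is strictly less than 1/2. -/
open Filter Pointwise

/-- Lower asymptotic density of a set of (positive) natural numbers,
computed on the initial segments `[1, n]`. -/
noncomputable def lowerDensityNat (A : Set ℕ) : ℝ :=
  liminf (fun n : ℕ => (Set.ncard (A ∩ Set.Icc 1 n) : ℝ) / n) atTop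

/-- (Upper) Banach density of a set of natural numbers: the limit over `n` of
`sup_x |A ∩ [x+1, x+n]| / n`, expressed as a `limsup` (the limit exists). -/
noncomputable def banachDensityNat (A : Set ℕ) : ℝ :=
  limsup (fun n : ℕ =>
    (⨆ x : ℕ, (Set.ncard (A ∩ Set.Icc (x + 1) (x + n)) : ℝ)) / n) atTop

/-! Construction -/

def PP (m : ℕ) : ℕ := 9 ^ (9 ^ m)
def GG (m : ℕ) : ℕ := 9 ^ (9 ^ m - m - 1)
def mu (j : ℕ) : ℕ := min ((Nat.unpair j).1 + 1) j
def HH (j : ℕ) : ℕ := PP (mu j) * PP j ^ 3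
def ll (j : ℕ) : ℕ := (PP (mu j) - 2) * HH j
def rr (j : ℕ) : ℕ := 2 * (PP (mu j) - 1) * HH j
def AA : Set ℕ := {a | ∀ j, 1 ≤ j → ll j ≤ a → a < rr j → PP (mu j) ∣ a}
def BB : Set ℕ := {b | ∃ i, 1 ≤ i ∧ ∃ w, 1 ≤ w ∧ w ≤ PP i ∧
    (∀ m, 1 ≤ m → m ≤ i → w % PP m < PP m - GG m) ∧ b = PP (i + 1) + w}

/-! Basic arithmetic about `PP`, `GG`. -/

lemma PP_pos (m : ℕ) : 0 < PP m := pow_pos (by norm_num) _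

lemma nine_le_PP (m : ℕ) : 9 ≤ PP m := by
  have : (9:ℕ) ^ 1 ≤ 9 ^ (9 ^ m) := Nat.pow_le_pow_right (by norm_num) (Nat.one_le_pow _ _ (by norm_num))
  simpa [PP] using this

lemma PP_mono : Monotone PP := fun a b h =>
  Nat.pow_le_pow_right (by norm_num) (Nat.pow_le_pow_right (by norm_num) h)

lemma PP_strictMono : StrictMono PP := fun a b h =>
  Nat.pow_lt_pow_right (by norm_num) (Nat.pow_lt_pow_right (by norm_num) h)

lemma PP_dvd (h : m ≤ n) : PP m ∣ PP n :=
  pow_dvd_pow _ (Nat.pow_le_pow_right (by norm_num) h)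

lemma lt_PP (m : ℕ) : m < PP m :=
  lt_of_lt_of_le (Nat.lt_pow_self (n := m) (by norm_num)) (Nat.pow_le_pow_right (by norm_num) (Nat.le_of_lt (Nat.lt_pow_self (n := m) (by norm_num))))

lemma GG_pos (m : ℕ) : 0 < GG m := pow_pos (by norm_num) _

lemma GG_lt_PP (m : ℕ) : GG m < PP m := by
  apply Nat.pow_lt_pow_right (by norm_num)
  have := pow_pos (show 0 < 9 by norm_num) m
  omega

lemma m_add_two_le_GG (m : ℕ) : m + 2 ≤ GG (m + 1) := by
  have h1 : m < 9 ^ m := Nat.lt_pow_self (n := m) (by norm_num)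
  have h2 : 2 * m + 4 ≤ 9 ^ (m + 1) := by
    have : 9 * (m + 1) ≤ 9 * 9 ^ m := by omega
    calc 2 * m + 4 ≤ 9 * (m + 1) := by omega
    _ ≤ 9 * 9 ^ m := this
    _ = 9 ^ (m + 1) := by ring
  have h3 : 9 ^ (m + 1) - (m + 1) - 1 ≥ m + 2 := by omega
  have h4 : 9 ^ (m + 1) - (m + 1) - 1 < 9 ^ (9 ^ (m + 1) - (m + 1) - 1) :=
    Nat.lt_pow_self (by norm_num)
  have : GG (m + 1) = 9 ^ (9 ^ (m + 1) - (m + 1) - 1) := rfl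
  omega

lemma PP_succ (j : ℕ) : PP (j + 1) = PP j ^ 9 := by
  rw [PP, PP, pow_succ, pow_mul]

/-! mu, HH, ll, rr basics -/

lemma mu_le (j : ℕ) : mu j ≤ j := min_le_right _ _

lemma one_le_mu {j : ℕ} (hj : 1 ≤ j) : 1 ≤ mu j := le_min (by omega) hj

lemma PPmu_le (j : ℕ) : PP (mu j) ≤ PP j := PP_mono (mu_le j)

lemma HH_pos (j : ℕ) : 0 < HH j := Nat.mul_pos (PP_pos _) (pow_pos (PP_pos _) _)

lemma rr_eq (j : ℕ) : rr j = ll j + PP (mu j) * HH j := by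
  have h9 := nine_le_PP (mu j)
  rw [ll, rr]
  have : 2 * (PP (mu j) - 1) = (PP (mu j) - 2) + PP (mu j) := by omega
  rw [this, Nat.add_mul]

lemma ll_lt_rr (j : ℕ) : ll j < rr j := by
  rw [rr_eq]
  have := HH_pos j; have := PP_pos (mu j)
  have : 0 < PP (mu j) * HH j := Nat.mul_pos ‹_› ‹_›
  omega

lemma PP_dvd_HH (j : ℕ) : PP (mu j) ∣ HH j := Dvd.intro _ rfl

lemma PP_dvd_ll (j : ℕ) : PP (mu j) ∣ ll j := Dvd.dvd.mul_left (PP_dvd_HH j) _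

lemma PPj3_le_ll (j : ℕ) : PP j ^ 3 ≤ ll j := by
  have h9 := nine_le_PP (mu j)
  calc PP j ^ 3 = 1 * (1 * PP j ^ 3) := by ring
  _ ≤ (PP (mu j) - 2) * (PP (mu j) * PP j ^ 3) := by
      apply Nat.mul_le_mul (by omega) (Nat.mul_le_mul (by omega) le_rfl)
  _ = ll j := rfl

lemma j_lt_ll (j : ℕ) : j < ll j := by
  have h1 : j < PP j := lt_PP j
  have h2 : PP j ≤ PP j ^ 3 := Nat.le_self_pow (by norm_num) _
  have := PPj3_le_ll j
  omega

lemma rr_le_pow5 (j : ℕ) : rr j ≤ 2 * PP j ^ 5 := by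
  have h1 := PPmu_le j
  have h2 := PP_pos (mu j)
  calc rr j = 2 * (PP (mu j) - 1) * (PP (mu j) * PP j ^ 3) := rfl
  _ ≤ 2 * PP j * (PP j * PP j ^ 3) := by
      apply Nat.mul_le_mul (by omega) (Nat.mul_le_mul h1 le_rfl)
  _ = 2 * PP j ^ 5 := by ring

lemma rr_add_two_le_PP_succ (j : ℕ) : rr j + 2 ≤ PP (j + 1) := by
  have h1 := rr_le_pow5 j
  have h9 := nine_le_PP j
  have : 2 * PP j ^ 5 + 2 ≤ PP j ^ 9 := by
    have h5 : PP j ^ 5 * 9 ≤ PP j ^ 5 * PP j ^ 4 := by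
      apply Nat.mul_le_mul le_rfl
      calc (9:ℕ) ≤ PP j := h9
      _ ≤ PP j ^ 4 := Nat.le_self_pow (by norm_num) _
    have h6 : (2:ℕ) ≤ PP j ^ 5 := le_trans (by omega) (Nat.le_self_pow (by norm_num) (PP j))
    have : PP j ^ 5 * PP j ^ 4 = PP j ^ 9 := by ring
    omega
  rw [PP_succ]
  omega

lemma rr_lt_PP_succ (j : ℕ) : rr j < PP (j + 1) := by have := rr_add_two_le_PP_succ j; omega

lemma rr_lt_ll_succ (j : ℕ) : rr j < ll (j + 1) := by
  have h1 := rr_lt_PP_succ j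
  have h2 : PP (j + 1) ≤ PP (j + 1) ^ 3 := Nat.le_self_pow (by norm_num) _
  have := PPj3_le_ll (j + 1)
  omega

lemma rr_mono : Monotone rr := by
  apply monotone_nat_of_le_succ
  intro j
  have h1 := rr_lt_ll_succ j
  have h2 := ll_lt_rr (j + 1)
  omega

lemma ll_mono : Monotone ll := by
  apply monotone_nat_of_le_succ
  intro j
  have h1 := ll_lt_rr j
  have h2 := rr_lt_ll_succ j
  omega

lemma q10 (j : ℕ) : (rr j + 2) * PP (j + 1) ≤ ll (j + 1) := by
  have h1 := rr_add_two_le_PP_succ j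
  calc (rr j + 2) * PP (j + 1) ≤ PP (j + 1) * PP (j + 1) := Nat.mul_le_mul h1 le_rfl
  _ ≤ PP (j + 1) ^ 3 := by
      have := PP_pos (j + 1)
      calc PP (j + 1) * PP (j + 1) = PP (j + 1) ^ 2 := by ring
      _ ≤ PP (j + 1) ^ 3 := Nat.pow_le_pow_right (PP_pos _) (by norm_num)
  _ ≤ ll (j + 1) := PPj3_le_ll _

lemma bigs (m : ℕ) : 2 * PP m + GG (m + 1) + 2 ≤ PP (m + 1) := by
  set X := 9 ^ (m + 1) with hX
  have hm : m < 9 ^ m := Nat.lt_pow_self (n := m) (by norm_num)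
  have hX9 : X = 9 * 9 ^ m := by rw [hX]; ring
  have h1 : 9 ^ m ≤ X - 2 := by omega
  have h2 : 9 ^ (m+1) - (m + 1) - 1 ≤ X - 2 := by omega
  have e1 : PP m ≤ 9 ^ (X - 2) := Nat.pow_le_pow_right (by norm_num) h1
  have e2 : GG (m + 1) ≤ 9 ^ (X - 2) := Nat.pow_le_pow_right (by norm_num) h2
  have e3 : PP (m + 1) = 81 * 9 ^ (X - 2) := by
    have hx2 : X = (X - 2) + 2 := by omega
    calc PP (m + 1) = 9 ^ X := rfl
    _ = 9 ^ ((X - 2) + 2) := by rw [← hx2]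
    _ = 81 * 9 ^ (X - 2) := by rw [pow_add]; ring
  have e4 : 0 < 9 ^ (X - 2) := pow_pos (by norm_num) _
  omega

/-! Counting helpers -/

open Finset in
lemma count_period (Q : ℕ) (hQ : 0 < Q) (p : ℕ → Prop) [DecidablePred p] :
    ∀ K a, Q ∣ a → ((Finset.Ico a (a + Q * K)).filter (fun w => p (w % Q))).card
      = K * ((Finset.range Q).filter p).card := by
  intro K
  induction K with
  | zero => intro a _; simp
  | succ K ih =>
    intro a ha
    obtain ⟨c, rfl⟩ := ha
    have hsplit : Finset.Ico (Q*c) (Q*c + Q * (K + 1)) =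
        Finset.Ico (Q*c) (Q*c + Q) ∪ Finset.Ico (Q*c + Q) (Q*c + Q * (K + 1)) := by
      rw [Finset.Ico_union_Ico_eq_Ico (by omega) (by nlinarith)]
    have hdisj : Disjoint (Finset.Ico (Q*c) (Q*c + Q)) (Finset.Ico (Q*c + Q) (Q*c + Q * (K + 1))) :=
      Finset.Ico_disjoint_Ico_consecutive _ _ _
    rw [hsplit, Finset.filter_union, Finset.card_union_of_disjoint
        (Finset.disjoint_filter_filter hdisj)]
    have h1 : ((Finset.Ico (Q*c) (Q*c + Q)).filter (fun w => p (w % Q))).card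
        = ((Finset.range Q).filter p).card := by
      apply Finset.card_nbij' (i := fun w => w % Q) (j := fun v => Q*c + v)
      · intro w hw
        simp only [Finset.mem_coe, Finset.mem_filter, Finset.mem_Ico] at hw
        simp only [Finset.mem_coe, Finset.mem_filter, Finset.mem_range]
        exact ⟨Nat.mod_lt _ hQ, hw.2⟩
      · intro v hv
        simp only [Finset.mem_coe, Finset.mem_filter, Finset.mem_range] at hv
        simp only [Finset.mem_coe, Finset.mem_filter, Finset.mem_Ico]
        have hm : (Q*c + v) % Q = v := by
          rw [Nat.mul_add_mod]; exact Nat.mod_eq_of_lt hv.1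
        exact ⟨⟨by omega, by omega⟩, by rw [hm]; exact hv.2⟩
      · intro w hw
        simp only [Finset.mem_coe, Finset.mem_filter, Finset.mem_Ico] at hw
        obtain ⟨⟨hw1, hw2⟩, _⟩ := hw
        have : w = Q * c + (w - Q * c) := by omega
        conv_rhs => rw [this]
        congr 1
        conv_lhs => rw [this]
        beta_reduce
        rw [Nat.mul_add_mod]
        exact Nat.mod_eq_of_lt (by omega)
      · intro v hv
        simp only [Finset.mem_coe, Finset.mem_filter, Finset.mem_range] at hv
        beta_reduce
        rw [Nat.mul_add_mod]
        exact Nat.mod_eq_of_lt hv.1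
    have he : Q * c + Q * (K + 1) = (Q * c + Q) + Q * K := by ring
    rw [h1, he, ih (Q * c + Q) ⟨c + 1, by ring⟩]; ring

open Finset in
lemma count_dvd_lower (Q l D : ℕ) (hQ : 0 < Q) (hl : Q ∣ l) :
    D / Q ≤ ((Finset.Ico l (l + D)).filter (fun w => Q ∣ w)).card := by
  have hsub : (Finset.range (D / Q)).image (fun t => l + Q * t) ⊆
      (Finset.Ico l (l + D)).filter (fun w => Q ∣ w) := by
    intro x hx
    simp only [Finset.mem_image, Finset.mem_range] at hx
    obtain ⟨t, ht, rfl⟩ := hx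
    simp only [Finset.mem_filter, Finset.mem_Ico]
    have h1 : Q * (t + 1) ≤ Q * (D / Q) := Nat.mul_le_mul le_rfl (by omega)
    have h2 : Q * (D / Q) ≤ D := by rw [Nat.mul_comm]; exact Nat.div_mul_le_self D Q
    exact ⟨⟨by omega, by nlinarith⟩, Dvd.dvd.add hl ⟨t, rfl⟩⟩
  calc D / Q = ((Finset.range (D / Q)).image (fun t => l + Q * t)).card := by
        rw [Finset.card_image_of_injective _ (fun x y h => by
          have : Q * x = Q * y := by omega
          exact Nat.eq_of_mul_eq_mul_left hQ this)]
        simp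
  _ ≤ _ := Finset.card_le_card hsub

open scoped Classical in
lemma ncard_bridge (S : Set ℕ) (a b : ℕ) :
    (S ∩ Set.Icc a b).ncard = ((Finset.Icc a b).filter (fun x => x ∈ S)).card := by
  rw [← Set.ncard_coe_finset]
  congr 1
  ext x
  simp [Set.mem_inter_iff, and_comm]

lemma geom_sum_lt' (t : ℕ) : ∑ e ∈ Finset.range t, 9 ^ e < 9 ^ t := by
  induction t with
  | zero => simp
  | succ t ih =>
    rw [Finset.sum_range_succ, pow_succ]
    have : 0 < 9 ^ t := pow_pos (by norm_num) _
    omega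

/-! Counting A -/

open scoped Classical in
noncomputable def cA (N : ℕ) : ℕ := ((Finset.Icc 1 N).filter (fun x => x ∈ AA)).card

lemma cA_le (N : ℕ) : cA N ≤ N := by
  classical
  calc cA N ≤ (Finset.Icc 1 N).card := Finset.card_filter_le _ _
  _ = N := by rw [Nat.card_Icc]; omega

lemma key_iv (P H N D q : ℕ) (h9 : 9 ≤ P) (hH : 0 < H)
    (hD : D ≤ P * H) (hq : P * q ≤ D) (hq2 : D < P * q + P)
    (hN : (P - 2) * H + D ≤ N + 1) :
    2 * D ≤ N + 2 * q + 4 := by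
  have e1 : (P - 2) * H + 2 * H = P * H := by
    calc (P - 2) * H + 2 * H = ((P - 2) + 2) * H := (Nat.add_mul _ _ _).symm
    _ = P * H := by congr 1; omega
  have e2 : P * q = (P - 2) * q + 2 * q := by
    calc P * q = ((P - 2) + 2) * q := by congr 1; omega
    _ = (P - 2) * q + 2 * q := Nat.add_mul _ _ _
  by_cases hqH : H ≤ q
  · have h1 : P * H ≤ P * q := Nat.mul_le_mul le_rfl hqH
    omega
  · push_neg at hqH
    have h3 : (P - 2) * (q + 1) ≤ (P - 2) * H := Nat.mul_le_mul le_rfl (by omega)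
    have h4 : (P - 2) * (q + 1) = (P - 2) * q + (P - 2) := by ring
    omega

open scoped Classical in
lemma claim1_lower {s N : ℕ} (hs : 1 ≤ s) (h1 : ll s ≤ N) (h2 : N < ll (s + 1)) :
    N ≤ 2 * cA N + 2 * rr (s - 1) + 4 := by
  set P := PP (mu s) with hP
  set H := HH s with hH
  have h9 : 9 ≤ P := nine_le_PP _
  have hHpos : 0 < H := HH_pos s
  have hreq : rr s = ll s + P * H := rr_eq s
  have hll : ll s = (P - 2) * H := rfl
  set N'' := min (N + 1) (rr s) with hN''
  have hlN'' : ll s ≤ N'' := by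
    have := ll_lt_rr s
    omega
  set D := N'' - ll s with hD
  set q := D / P with hq
  have hIco : Finset.Ico (ll s) N'' = Finset.Ico (ll s) (ll s + D) := by
    congr 1; omega
  set bad := (Finset.Ico (ll s) N'').filter (fun w => ¬ P ∣ w) with hbad
  set mult := (Finset.Ico (ll s) N'').filter (fun w => P ∣ w) with hmult
  have hcards : mult.card + bad.card = D := by
    rw [hmult, hbad, Finset.card_filter_add_card_filter_not, Nat.card_Ico]
  have hmlow : q ≤ mult.card := by
    rw [hmult, hIco]
    exact count_dvd_lower P (ll s) D (by omega) (PP_dvd_ll s)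
  -- inclusion
  have hincl : Finset.Icc 1 N \ (Finset.Icc 1 (rr (s-1)) ∪ bad) ⊆
      (Finset.Icc 1 N).filter (fun x => x ∈ AA) := by
    intro x hx
    simp only [Finset.mem_sdiff, Finset.mem_union, Finset.mem_Icc, Finset.mem_filter,
      hbad, Finset.mem_Ico, not_or, not_and, not_not] at hx ⊢
    obtain ⟨⟨hx1, hx2⟩, hx3, hx4⟩ := hx
    refine ⟨⟨hx1, hx2⟩, ?_⟩
    intro j hj hlj hrj
    rcases lt_trichotomy j s with hjs | hjs | hjs
    · exfalso
      have : rr j ≤ rr (s - 1) := rr_mono (by omega)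
      omega
    · subst hjs
      exact hx4 ⟨hlj, by omega⟩
    · exfalso
      have : ll (s + 1) ≤ ll j := ll_mono (by omega)
      omega
  have hcard1 : N ≤ cA N + (rr (s - 1) + bad.card) := by
    have e1 : (Finset.Icc 1 N).card = N := by rw [Nat.card_Icc]; omega
    have e2 : (Finset.Icc 1 (rr (s-1)) ∪ bad).card ≤ rr (s - 1) + bad.card := by
      calc (Finset.Icc 1 (rr (s-1)) ∪ bad).card ≤ (Finset.Icc 1 (rr (s-1))).card + bad.card :=
        Finset.card_union_le _ _
      _ ≤ rr (s - 1) + bad.card := by rw [Nat.card_Icc]; omega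
    have e3 := Finset.le_card_sdiff (Finset.Icc 1 (rr (s-1)) ∪ bad) (Finset.Icc 1 N)
    have e4 : (Finset.Icc 1 N \ (Finset.Icc 1 (rr (s-1)) ∪ bad)).card ≤ cA N :=
      Finset.card_le_card hincl
    rw [cA] at e4 ⊢
    omega
  have hiv : 2 * D ≤ N + 2 * q + 4 := by
    apply key_iv P H N D q h9 hHpos
    · omega
    · rw [hq, Nat.mul_comm]
      exact Nat.div_mul_le_self D P
    · have e5 : P * q + D % P = D := by rw [hq]; exact Nat.div_add_mod D P
      have e6 := Nat.mod_lt D (show 0 < P by omega)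
      omega
    · omega
  have k1 : bad.card + q ≤ D := by omega
  omega

open scoped Classical in
lemma claim1_upper {j : ℕ} (hj : 1 ≤ j) : 2 * cA (rr j) ≤ rr j := by
  set P := PP (mu j) with hP
  set H := HH j with hHd
  have h9 : 9 ≤ P := nine_le_PP _
  have hHpos : 0 < H := HH_pos j
  have hreq : rr j = ll j + P * H := rr_eq j
  set bad := (Finset.Ico (ll j) (rr j)).filter (fun w => ¬ P ∣ w) with hbad
  have hbadcard : bad.card = H * (P - 1) := by
    have hIco : Finset.Ico (ll j) (rr j) = Finset.Ico (ll j) (ll j + P * H) := by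
      rw [hreq]
    have hfc : bad = (Finset.Ico (ll j) (ll j + P * H)).filter
        (fun w => (fun v => ¬ v = 0) (w % P)) := by
      rw [hbad, hIco]
      apply Finset.filter_congr
      intro w _
      simp only [eq_iff_iff]
      constructor
      · intro h h2; exact h ((Nat.dvd_iff_mod_eq_zero).mpr h2)
      · intro h h2; exact h ((Nat.dvd_iff_mod_eq_zero).mp h2)
    rw [hfc, count_period P (by omega) (fun v => ¬ v = 0) H (ll j) (PP_dvd_ll j)]
    have : (Finset.range P).filter (fun v => ¬ v = 0) = Finset.Ico 1 P := by
      ext v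
      simp only [Finset.mem_filter, Finset.mem_range, Finset.mem_Ico]
      omega
    rw [this, Nat.card_Ico]
  have hdisj : Disjoint ((Finset.Icc 1 (rr j)).filter (fun x => x ∈ AA)) bad := by
    rw [Finset.disjoint_left]
    intro x hx hxbad
    simp only [Finset.mem_filter, Finset.mem_Icc] at hx
    simp only [hbad, Finset.mem_filter, Finset.mem_Ico] at hxbad
    exact hxbad.2 (hx.2 j hj hxbad.1.1 hxbad.1.2)
  have hsub : ((Finset.Icc 1 (rr j)).filter (fun x => x ∈ AA)) ∪ bad ⊆ Finset.Icc 1 (rr j) := by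
    apply Finset.union_subset (Finset.filter_subset _ _)
    intro x hx
    simp only [hbad, Finset.mem_filter, Finset.mem_Ico] at hx
    simp only [Finset.mem_Icc]
    have hl1 : 1 ≤ ll j := by have := j_lt_ll j; omega
    omega
  have hcards : cA (rr j) + bad.card ≤ rr j := by
    have := Finset.card_union_of_disjoint hdisj
    have h2 := Finset.card_le_card hsub
    have h3 : (Finset.Icc 1 (rr j)).card = rr j := by rw [Nat.card_Icc]; omega
    rw [cA]
    omega
  have hll : ll j = (P - 2) * H := rfl
  have e1 : (P - 2) * H + 2 * H = P * H := by
    calc (P - 2) * H + 2 * H = ((P - 2) + 2) * H := (Nat.add_mul _ _ _).symm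
    _ = P * H := by congr 1; omega
  have e2 : H * P = H * (P - 1) + H := by
    have h' : P = (P - 1) + 1 := by omega
    calc H * P = H * ((P - 1) + 1) := by rw [← h']
    _ = H * (P - 1) + H * 1 := Nat.mul_add _ _ _
    _ = H * (P - 1) + H := by rw [Nat.mul_one]
  have e3 : H * P = P * H := Nat.mul_comm _ _
  omega

lemma cA_bridge (n : ℕ) : (AA ∩ Set.Icc 1 n).ncard = cA n := by
  classical
  rw [ncard_bridge, cA]

lemma claim1 : lowerDensityNat AA = 1 / 2 := by
  have hbridge : ∀ n : ℕ, (Set.ncard (AA ∩ Set.Icc 1 n) : ℝ) = (cA n : ℝ) := by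
    intro n; rw [cA_bridge]
  set f : ℕ → ℝ := fun n => (Set.ncard (AA ∩ Set.Icc 1 n) : ℝ) / n with hf
  have hf0 : ∀ n, 0 ≤ f n := by
    intro n
    apply div_nonneg (by positivity) (by positivity)
  have hf1 : ∀ n, f n ≤ 1 := by
    intro n
    rcases Nat.eq_zero_or_pos n with h | h
    · subst h; simp [hf]
    · rw [hf]
      simp only []
      rw [div_le_one (by positivity)]
      rw [hbridge]
      exact_mod_cast cA_le n
  have hbdd_le : IsBoundedUnder (· ≤ ·) atTop f := Filter.isBoundedUnder_of ⟨1, hf1⟩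
  have hbdd_ge : IsBoundedUnder (· ≥ ·) atTop f := Filter.isBoundedUnder_of ⟨0, hf0⟩
  have hupper : liminf f atTop ≤ 1 / 2 := by
    apply liminf_le_of_frequently_le _ hbdd_ge
    rw [Filter.frequently_atTop]
    intro a
    refine ⟨rr (max a 1), ?_, ?_⟩
    · have h1 := j_lt_ll (max a 1)
      have h2 := ll_lt_rr (max a 1)
      omega
    · have hj : 1 ≤ max a 1 := le_max_right _ _
      have hcu := claim1_upper hj
      have hrpos : 0 < rr (max a 1) := by
        have := j_lt_ll (max a 1); have := ll_lt_rr (max a 1); omega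
      rw [hf]
      simp only []
      rw [hbridge, div_le_iff₀ (by positivity)]
      push_cast
      have : (2 : ℝ) * cA (rr (max a 1)) ≤ rr (max a 1) := by exact_mod_cast hcu
      linarith
  have hlower : ∀ ε : ℝ, 0 < ε → 1 / 2 - ε ≤ liminf f atTop := by
    intro ε hε
    apply le_liminf_of_le (hbdd_le.isCoboundedUnder_ge)
    rw [Filter.eventually_atTop]
    set s₀ : ℕ := ⌈1/ε⌉₊ + 1 with hs₀
    have hs₀1 : 1 ≤ s₀ := by omega
    have hPPs₀ : (1:ℝ) ≤ ε * PP s₀ := by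
      have h1 : (1/ε : ℝ) ≤ ⌈1/ε⌉₊ := Nat.le_ceil _
      have h2 : (⌈1/ε⌉₊ : ℝ) + 1 ≤ PP s₀ := by
        have := lt_PP s₀
        have : (s₀ : ℝ) ≤ PP s₀ := by exact_mod_cast Nat.le_of_lt (lt_PP s₀)
        rw [hs₀] at this ⊢
        push_cast at this ⊢
        linarith
      have h3 : (1/ε : ℝ) ≤ PP s₀ := by linarith
      calc (1:ℝ) = ε * (1/ε) := by field_simp
      _ ≤ ε * PP s₀ := by apply mul_le_mul_of_nonneg_left h3 (le_of_lt hε)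
  -- ⊢ ∃ N₀, ∀ N ≥ N₀, 1/2 - ε ≤ f N
    refine ⟨ll s₀, ?_⟩
    intro N hN
    have hN' : ll s₀ ≤ N := hN
    set s := Nat.findGreatest (fun s => ll s ≤ N) N with hsd
    have hs₀N : s₀ ≤ N := le_trans (Nat.le_of_lt (j_lt_ll s₀)) hN'
    have hss₀ : s₀ ≤ s := Nat.le_findGreatest (P := fun s => ll s ≤ N) hs₀N hN'
    have hs1 : 1 ≤ s := le_trans hs₀1 hss₀
    have hlsN : ll s ≤ N := Nat.findGreatest_spec (P := fun s => ll s ≤ N) hs₀N hN'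
    have hNls : N < ll (s + 1) := by
      by_cases hc : s + 1 ≤ N
      · have := Nat.findGreatest_is_greatest (P := fun s => ll s ≤ N) (n := N) (by omega) hc
        omega
      · have := j_lt_ll (s + 1)
        omega
    have hmain := claim1_lower hs1 hlsN hNls
    have hq10 : (rr (s - 1) + 2) * PP s ≤ ll s := by
      have := q10 (s - 1)
      have he : s - 1 + 1 = s := by omega
      rw [he] at this
      exact this
    have hNpos : 0 < N := by
      have := j_lt_ll s₀; omega
    rw [hf]
    simp only []
    rw [hbridge, le_div_iff₀ (by positivity)]
    -- real arithmetic
    have hPPmono : (PP s₀ : ℝ) ≤ PP s := by exact_mod_cast PP_mono hss₀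
    have hPP0 : (0:ℝ) < PP s₀ := by exact_mod_cast PP_pos s₀
    set r' := rr (s - 1) with hr'
    have hcast1 : (N : ℝ) ≤ 2 * cA N + 2 * r' + 4 := by exact_mod_cast hmain
    have hcast2 : ((r' : ℝ) + 2) * PP s ≤ N := by
      calc ((r' : ℝ) + 2) * PP s ≤ ll s := by exact_mod_cast hq10
      _ ≤ N := by exact_mod_cast hlsN
    have t1 : ((r' : ℝ) + 2) * PP s₀ ≤ ((r' : ℝ) + 2) * PP s :=
      mul_le_mul_of_nonneg_left hPPmono (by positivity)
    have t2 : ((r' : ℝ) + 2) * PP s₀ ≤ N := t1.trans hcast2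
    have t3 : ε * (((r' : ℝ) + 2) * PP s₀) ≤ ε * N := mul_le_mul_of_nonneg_left t2 (le_of_lt hε)
    have t4 : ((r' : ℝ) + 2) ≤ ε * (((r' : ℝ) + 2) * PP s₀) := by
      have : ε * (((r' : ℝ) + 2) * PP s₀) = ((r':ℝ) + 2) * (ε * PP s₀) := by ring
      rw [this]
      calc ((r':ℝ) + 2) = ((r':ℝ) + 2) * 1 := by ring
      _ ≤ ((r':ℝ) + 2) * (ε * PP s₀) := mul_le_mul_of_nonneg_left hPPs₀ (by positivity)
    linarith
  have : 1 / 2 ≤ liminf f atTop := by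
    by_contra hc
    push_neg at hc
    have h1 := hlower ((1/2 - liminf f atTop)/2) (by linarith)
    linarith
  rw [lowerDensityNat]
  linarith [hupper, this]

/-! Claim 2 : Banach density of BB -/

open scoped Classical in
noncomputable def Theta (i : ℕ) : Finset ℕ :=
  (Finset.Icc 1 (PP i)).filter (fun w => ∀ m, 1 ≤ m → m ≤ i → w % PP m < PP m - GG m)

open scoped Classical in
lemma Theta_card {i : ℕ} (hi : 1 ≤ i) : 8 * 9 ^ (9 ^ i - 1) ≤ (Theta i).card := by
  set E := 9 ^ i with hE
  have hiE : i + 1 ≤ E := by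
    have := Nat.lt_pow_self (n := i) (show 1 < 9 by norm_num)
    omega
  have hbadm : ∀ m, 1 ≤ m → m ≤ i →
      ((Finset.Icc 1 (PP i)).filter (fun w => ¬ w % PP m < PP m - GG m)).card
        = 9 ^ (E - m - 1) := by
    intro m hm1 hmi
    have hQ : 0 < PP m := PP_pos m
    have hGP : GG m < PP m := GG_lt_PP m
    have hdvd : PP m ∣ PP i := PP_dvd hmi
    have hKQ : PP m * (PP i / PP m) = PP i := Nat.mul_div_cancel' hdvd
    have hset : (Finset.Icc 1 (PP i)).filter (fun w => ¬ w % PP m < PP m - GG m)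
        = (Finset.Ico 0 (0 + PP m * (PP i / PP m))).filter
            (fun w => (fun v => ¬ v < PP m - GG m) (w % PP m)) := by
      ext w
      simp only [Finset.mem_filter, Finset.mem_Icc, Finset.mem_Ico]
      constructor
      · rintro ⟨⟨hw1, hw2⟩, hw3⟩
        refine ⟨⟨by omega, ?_⟩, hw3⟩
        rw [Nat.zero_add, hKQ]
        rcases Nat.lt_or_ge w (PP i) with h | h
        · exact h
        · exfalso
          have hwPi : w = PP i := by omega
          rw [hwPi, Nat.mod_eq_zero_of_dvd hdvd] at hw3
          omega
      · rintro ⟨⟨_, hw2⟩, hw3⟩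
        rw [Nat.zero_add, hKQ] at hw2
        refine ⟨⟨?_, by omega⟩, hw3⟩
        rcases Nat.eq_zero_or_pos w with h | h
        · exfalso; rw [h] at hw3; simp at hw3; omega
        · omega
    rw [hset, count_period (PP m) hQ (fun v => ¬ v < PP m - GG m) (PP i / PP m) 0 (dvd_zero _)]
    have hrange : (Finset.range (PP m)).filter (fun v => ¬ v < PP m - GG m)
        = Finset.Ico (PP m - GG m) (PP m) := by
      ext v
      simp only [Finset.mem_filter, Finset.mem_range, Finset.mem_Ico]
      omega
    have hKval : PP i / PP m = 9 ^ (E - 9 ^ m) := by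
      rw [PP, PP, Nat.pow_div (Nat.pow_le_pow_right (by norm_num) hmi) (by norm_num), hE]
    rw [hrange, Nat.card_Ico, hKval]
    have hGval : PP m - (PP m - GG m) = GG m := by
      have := GG_lt_PP m
      omega
    rw [hGval, GG, ← pow_add]
    congr 1
    have h1 : m + 1 ≤ 9 ^ m := by
      have := Nat.lt_pow_self (n := m) (show 1 < 9 by norm_num)
      omega
    have h2 : 9 ^ m ≤ E := by
      rw [hE]; exact Nat.pow_le_pow_right (by norm_num) hmi
    omega
  -- union bound
  have hsub : (Finset.Icc 1 (PP i)).filter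
      (fun w => ¬ ∀ m, 1 ≤ m → m ≤ i → w % PP m < PP m - GG m)
      ⊆ (Finset.Icc 1 i).biUnion
          (fun m => (Finset.Icc 1 (PP i)).filter (fun w => ¬ w % PP m < PP m - GG m)) := by
    intro w hw
    simp only [Finset.mem_filter, Finset.mem_Icc, not_forall] at hw
    obtain ⟨hwIcc, m, hm1, hmi, hbad⟩ := hw
    simp only [Finset.mem_biUnion, Finset.mem_filter, Finset.mem_Icc]
    exact ⟨m, ⟨hm1, hmi⟩, ⟨hwIcc, hbad⟩⟩
  have hbadsum : ((Finset.Icc 1 (PP i)).filter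
      (fun w => ¬ ∀ m, 1 ≤ m → m ≤ i → w % PP m < PP m - GG m)).card ≤ 9 ^ (E - 1) := by
    calc _ ≤ ((Finset.Icc 1 i).biUnion
          (fun m => (Finset.Icc 1 (PP i)).filter (fun w => ¬ w % PP m < PP m - GG m))).card :=
        Finset.card_le_card hsub
    _ ≤ ∑ m ∈ Finset.Icc 1 i,
          ((Finset.Icc 1 (PP i)).filter (fun w => ¬ w % PP m < PP m - GG m)).card :=
        Finset.card_biUnion_le
    _ = ∑ m ∈ Finset.Icc 1 i, 9 ^ (E - m - 1) := by
        apply Finset.sum_congr rfl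
        intro m hm
        simp only [Finset.mem_Icc] at hm
        exact hbadm m hm.1 hm.2
    _ = ∑ e ∈ (Finset.Icc 1 i).image (fun m => E - m - 1), 9 ^ e := by
        rw [Finset.sum_image]
        intro m₁ hm₁ m₂ hm₂ he
        simp only [Finset.mem_coe, Finset.mem_Icc] at hm₁ hm₂
        beta_reduce at he
        omega
    _ ≤ ∑ e ∈ Finset.range (E - 1), 9 ^ e := by
        apply Finset.sum_le_sum_of_subset
        intro e he
        simp only [Finset.mem_image, Finset.mem_Icc] at he
        obtain ⟨m, ⟨hm1, hmi⟩, rfl⟩ := he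
        simp only [Finset.mem_range]
        omega
    _ ≤ 9 ^ (E - 1) := le_of_lt (geom_sum_lt' _)
  have htot := Finset.card_filter_add_card_filter_not
    (s := Finset.Icc 1 (PP i)) (fun w => ∀ m, 1 ≤ m → m ≤ i → w % PP m < PP m - GG m)
  have hicc : (Finset.Icc 1 (PP i)).card = PP i := by
    rw [Nat.card_Icc]; omega
  have hPiE : PP i = 9 * 9 ^ (E - 1) := by
    have h' : E = (E - 1) + 1 := by omega
    calc PP i = 9 ^ E := by rw [PP, hE]
    _ = 9 ^ ((E - 1) + 1) := by rw [← h']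
    _ = 9 * 9 ^ (E - 1) := by rw [pow_succ]; ring
  rw [Theta]
  omega

lemma ncard_Icc_nat (a b : ℕ) : (Set.Icc a b).ncard = b + 1 - a := by
  rw [← Finset.coe_Icc, Set.ncard_coe_finset, Nat.card_Icc]

open scoped Classical in
lemma window_count {i : ℕ} (hi : 1 ≤ i) :
    8 * 9 ^ (9 ^ i - 1) ≤ (BB ∩ Set.Icc (PP (i+1) + 1) (PP (i+1) + PP i)).ncard := by
  have hsub : (Theta i).image (fun w => PP (i+1) + w) ⊆
      (Finset.Icc (PP (i+1) + 1) (PP (i+1) + PP i)).filter (fun x => x ∈ BB) := by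
    intro x hx
    simp only [Finset.mem_image] at hx
    obtain ⟨w, hw, rfl⟩ := hx
    simp only [Theta, Finset.mem_filter, Finset.mem_Icc] at hw
    obtain ⟨⟨hw1, hw2⟩, hw3⟩ := hw
    simp only [Finset.mem_filter, Finset.mem_Icc]
    refine ⟨⟨by omega, by omega⟩, ?_⟩
    exact ⟨i, hi, w, hw1, hw2, hw3, rfl⟩
  have hcard : ((Theta i).image (fun w => PP (i+1) + w)).card = (Theta i).card :=
    Finset.card_image_of_injective _ (fun a b h => by omega)
  rw [ncard_bridge]
  calc 8 * 9 ^ (9 ^ i - 1) ≤ (Theta i).card := Theta_card hi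
  _ = ((Theta i).image (fun w => PP (i+1) + w)).card := hcard.symm
  _ ≤ _ := Finset.card_le_card hsub

lemma claim2 : 8 / 9 ≤ banachDensityNat BB := by
  set g : ℕ → ℕ → ℝ := fun n x => (Set.ncard (BB ∩ Set.Icc (x + 1) (x + n)) : ℝ) with hg
  have hgle : ∀ n x, g n x ≤ n := by
    intro n x
    rw [hg]
    simp only []
    have h1 : (BB ∩ Set.Icc (x+1) (x+n)).ncard ≤ (Set.Icc (x+1) (x+n)).ncard :=
      Set.ncard_le_ncard Set.inter_subset_right (Set.finite_Icc _ _)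
    have h2 : (Set.Icc (x+1) (x+n)).ncard = n := by rw [ncard_Icc_nat]; omega
    have := h1.trans_eq h2
    exact_mod_cast this
  have hg0 : ∀ n x, 0 ≤ g n x := fun n x => by positivity
  set f : ℕ → ℝ := fun n => (⨆ x : ℕ, g n x) / n with hf
  have hbdd : ∀ n, BddAbove (Set.range (g n)) := by
    intro n
    exact ⟨n, by rintro y ⟨x, rfl⟩; exact hgle n x⟩
  have hf1 : ∀ n, f n ≤ 1 := by
    intro n
    rcases Nat.eq_zero_or_pos n with h | h
    · subst h; simp [hf]
    · rw [hf]
      simp only []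
      rw [div_le_one (by exact_mod_cast h)]
      exact ciSup_le (fun x => hgle n x)
  have hbdd_le : IsBoundedUnder (· ≤ ·) atTop f := Filter.isBoundedUnder_of ⟨1, hf1⟩
  have key : ∀ i : ℕ, 1 ≤ i → (8:ℝ)/9 ≤ f (PP i) := by
    intro i hi
    have h1 : (8 * 9 ^ (9 ^ i - 1) : ℝ) ≤ g (PP i) (PP (i+1)) := by
      rw [hg]
      simp only []
      exact_mod_cast window_count hi
    have h2 : g (PP i) (PP (i+1)) ≤ ⨆ x, g (PP i) x := le_ciSup (hbdd (PP i)) _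
    have hPpos : (0:ℝ) < PP i := by exact_mod_cast PP_pos i
    rw [hf]
    simp only []
    rw [le_div_iff₀ hPpos]
    have hPval : (PP i : ℝ) = 9 * (9:ℝ) ^ (9 ^ i - 1) := by
      have hE : 9 ^ i = (9 ^ i - 1) + 1 := by
        have : 0 < 9 ^ i := pow_pos (by norm_num) _
        omega
      rw [PP]
      calc (((9:ℕ) ^ (9 ^ i) : ℕ) : ℝ) = (((9:ℕ) ^ ((9 ^ i - 1) + 1) : ℕ) : ℝ) := by rw [← hE]
      _ = 9 * (9:ℝ) ^ (9 ^ i - 1) := by push_cast [pow_succ]; ring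
    rw [hPval]
    have : (8:ℝ)/9 * (9 * (9:ℝ) ^ (9 ^ i - 1)) = 8 * (9:ℝ) ^ (9 ^ i - 1) := by ring
    rw [this]
    have h1' : (8 * (9:ℝ) ^ (9 ^ i - 1)) ≤ g (PP i) (PP (i+1)) := by
      have he : ((8 * 9 ^ (9 ^ i - 1) : ℕ) : ℝ) = 8 * (9:ℝ) ^ (9 ^ i - 1) := by push_cast; ring
      rw [← he]
      rw [hg]
      simp only []
      exact_mod_cast window_count hi
    linarith
  have hfreq : ∃ᶠ n in atTop, (8:ℝ)/9 ≤ f n := by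
    rw [Filter.frequently_atTop]
    intro a
    refine ⟨PP (max a 1), ?_, key _ (le_max_right _ _)⟩
    have := lt_PP (max a 1)
    omega
  have := le_limsup_of_frequently_le hfreq hbdd_le
  rw [banachDensityNat]
  exact this

/-! Claim 3 : holes -/

lemma hole_not_mem {m j h : ℕ} (hj : 1 ≤ j) (hmu : mu j = m + 1)
    (h1 : ll j + 2 * PP j + m + 1 ≤ h) (h2 : h < rr j)
    (h3 : h % PP (m + 1) = PP (m + 1) - 1) :
    h ∉ AA + BB + Set.Icc 0 m := by
  intro hmem
  rw [Set.mem_add] at hmem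
  obtain ⟨p, hp, t, ht, hpt⟩ := hmem
  rw [Set.mem_add] at hp
  obtain ⟨a, ha, b, hb, hab⟩ := hp
  simp only [Set.mem_Icc] at ht
  obtain ⟨i, hi1, w, hw1, hw2, hwθ, hbeq⟩ := hb
  set M := m + 1 with hM
  have hPM9 : 9 ≤ PP M := nine_le_PP M
  have hGm : m + 2 ≤ GG M := m_add_two_le_GG m
  have hGP : GG M < PP M := GG_lt_PP M
  have hblt : b < PP (j + 1) := by
    have hbh : b ≤ h := by omega
    have := rr_lt_PP_succ j
    omega
  have hij : i < j := by
    by_contra hc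
    push_neg at hc
    have e1 : PP (j + 1) ≤ PP (i + 1) := PP_mono (by omega)
    have e2 : PP (i + 1) ≤ b := by rw [hbeq]; omega
    omega
  have hble : b ≤ 2 * PP j := by
    have e1 : PP (i + 1) ≤ PP j := PP_mono (by omega)
    have e2 : PP i ≤ PP j := PP_mono (by omega)
    rw [hbeq]; omega
  rcases Nat.lt_or_ge a (ll j) with hal | hal
  · omega
  · have haj : PP (mu j) ∣ a := ha j hj hal (by omega)
    rw [hmu] at haj
    have hmod : (b + t) % PP M = PP M - 1 := by
      obtain ⟨c, hc⟩ := haj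
      have he : h = PP M * c + (b + t) := by omega
      rw [he, Nat.mul_add_mod] at h3
      exact h3
    have hbigs := bigs m
    rw [← hM] at hbigs
    rcases Nat.lt_or_ge i M with hiM | hiM
    · -- i < M
      rcases Nat.eq_or_lt_of_le (show i + 1 ≤ M by omega) with hiM1 | hiM1
      · -- i + 1 = M
        have hwt : (b + t) % PP M = (w + t) % PP M := by
          rw [hbeq, hiM1]
          have : PP M + w + t = PP M * 1 + (w + t) := by ring
          rw [this, Nat.mul_add_mod]
        have hPi : PP i = PP m := by
          have : i = m := by omega
          rw [this]
        have hsmall : w + t < PP M - 1 := by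
          have : PP m ≥ m := Nat.le_of_lt (lt_PP m)
          omega
        rw [hwt, Nat.mod_eq_of_lt (by omega)] at hmod
        omega
      · -- i + 1 < M, so i + 1 ≤ m
        have e1 : PP (i + 1) ≤ PP m := PP_mono (by omega)
        have e2 : PP i ≤ PP m := PP_mono (by omega)
        have hsmall : b + t < PP M - 1 := by
          rw [hbeq]
          omega
        rw [Nat.mod_eq_of_lt (by omega)] at hmod
        omega
    · -- M ≤ i
      have hθ := hwθ M (by omega) hiM
      obtain ⟨c, hc⟩ := PP_dvd (show M ≤ i + 1 by omega)
      have hwt : (b + t) % PP M = (w + t) % PP M := by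
        rw [hbeq, hc]
        have : PP M * c + w + t = PP M * c + (w + t) := by ring
        rw [this, Nat.mul_add_mod]
      have hq := Nat.div_add_mod w (PP M)
      have hwmod : (w + t) % PP M = w % PP M + t := by
        have he : w + t = PP M * (w / PP M) + (w % PP M + t) := by omega
        rw [he, Nat.mul_add_mod]
        exact Nat.mod_eq_of_lt (by omega)
      rw [hwt, hwmod] at hmod
      omega

open scoped Classical in
lemma claim3_count {m j : ℕ} (hj : 1 ≤ j) (hmu : mu j = m + 1) (hjm : m + 1 ≤ j) :
    4 * PP (m+1) * (((Finset.Icc 1 (rr j)).filter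
        (fun x => x ∈ {x : ℕ | Set.Icc x (x + PP (m+1)) ⊆ AA + BB + Set.Icc 0 m})).card)
      ≤ (2 * PP (m+1) - 1) * rr j := by
  set P := PP (m + 1) with hP
  set y := PP j with hy
  have hP9 : 9 ≤ P := nine_le_PP _
  have hPy : P ≤ y := PP_mono hjm
  have hy9 : 9 ≤ y := nine_le_PP _
  have hmP : m + 2 ≤ P := by
    have := lt_PP (m + 1); omega
  set LB := ll j + 2 * y + m + 1 with hLB
  have hHeq : HH j = P * y ^ 3 := by rw [HH, hmu]
  have hrj : rr j = 2 * (P - 1) * (P * y ^ 3) := by rw [rr, hmu, hHeq]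
  have hlj : ll j = (P - 2) * (P * y ^ 3) := by rw [ll, hmu, hHeq]
  have hrP : P + 1 ≤ rr j := by
    obtain ⟨u, hu⟩ : ∃ u, P = u + 9 := ⟨P - 9, by omega⟩
    have h1 : 1 ≤ y ^ 3 := Nat.one_le_pow _ _ (by omega)
    rw [hrj, hu]
    calc u + 9 + 1 ≤ 2 * (u + 8) * ((u + 9) * 1) := by nlinarith
    _ ≤ 2 * (u + 9 - 1) * ((u + 9) * y ^ 3) := by
        have he : u + 9 - 1 = u + 8 := by omega
        rw [he]
        exact Nat.mul_le_mul le_rfl (Nat.mul_le_mul le_rfl h1)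
  -- subset property
  have hsub : (Finset.Icc 1 (rr j)).filter
      (fun x => x ∈ {x : ℕ | Set.Icc x (x + P) ⊆ AA + BB + Set.Icc 0 m})
      ⊆ Finset.Icc 1 LB ∪ Finset.Icc (rr j - P) (rr j) := by
    intro x hx
    simp only [Finset.mem_filter, Finset.mem_Icc, Set.mem_setOf_eq] at hx
    obtain ⟨⟨hx1, hx2⟩, hxT⟩ := hx
    simp only [Finset.mem_union, Finset.mem_Icc]
    by_contra hc
    push_neg at hc
    have hxLB : LB < x := hc.1 hx1
    have hxr : x < rr j - P := by
      by_contra hge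
      push_neg at hge
      have := hc.2 hge
      omega
    set z := P * (x / P) + (P - 1) with hz
    have hdm := Nat.div_add_mod x P
    have hxm : x % P < P := Nat.mod_lt _ (by omega)
    have hxz : x ≤ z := by omega
    have hzx : z ≤ x + P := by omega
    have hzmod : z % P = P - 1 := by
      rw [hz, Nat.mul_add_mod]
      exact Nat.mod_eq_of_lt (by omega)
    have hhole := hole_not_mem (m := m) (j := j) hj hmu
      (show ll j + 2 * PP j + m + 1 ≤ z by rw [← hy]; omega)
      (show z < rr j by omega)
      (show z % PP (m+1) = PP (m+1) - 1 by rw [← hP]; exact hzmod)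
    exact hhole (hxT ⟨hxz, hzx⟩)
  have hcards : ((Finset.Icc 1 (rr j)).filter
      (fun x => x ∈ {x : ℕ | Set.Icc x (x + P) ⊆ AA + BB + Set.Icc 0 m})).card
      ≤ LB + (P + 1) := by
    calc _ ≤ (Finset.Icc 1 LB ∪ Finset.Icc (rr j - P) (rr j)).card := Finset.card_le_card hsub
    _ ≤ (Finset.Icc 1 LB).card + (Finset.Icc (rr j - P) (rr j)).card := Finset.card_union_le _ _
    _ ≤ LB + (P + 1) := by
        rw [Nat.card_Icc, Nat.card_Icc]
        omega
  -- arithmetic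
  have harith : 4 * P * (LB + (P + 1)) ≤ (2 * P - 1) * rr j := by
    have h1 : LB + (P + 1) ≤ ll j + 4 * y := by
      rw [hLB]
      omega
    have h2 : 4 * P * (ll j + 4 * y) ≤ (2 * P - 1) * rr j := by
      obtain ⟨u, hu⟩ : ∃ u, P = u + 9 := ⟨P - 9, by omega⟩
      have e7 : P - 2 = u + 7 := by omega
      have e8 : P - 1 = u + 8 := by omega
      have e17 : 2 * P - 1 = 2 * u + 17 := by omega
      rw [hlj, hrj, e7, e8, e17, hu]
      have hyw : y ≤ y ^ 3 := Nat.le_self_pow (by norm_num) _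
      have h4 : 16 * ((u + 9) * y) ≤ 16 * ((u + 9) * (y ^ 3)) :=
        Nat.mul_le_mul le_rfl (Nat.mul_le_mul le_rfl hyw)
      have h5 : 16 * ((u + 9) * y ^ 3) ≤ (2 * u + 20) * ((u + 9) * y ^ 3) :=
        Nat.mul_le_mul (by omega) le_rfl
      nlinarith [h4, h5]
    calc 4 * P * (LB + (P + 1)) ≤ 4 * P * (ll j + 4 * y) := Nat.mul_le_mul le_rfl h1
    _ ≤ (2 * P - 1) * rr j := h2
  calc 4 * P * _ ≤ 4 * P * (LB + (P + 1)) := Nat.mul_le_mul le_rfl hcards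
  _ ≤ (2 * P - 1) * rr j := harith

lemma claim3 (m : ℕ) :
    lowerDensityNat {x : ℕ | Set.Icc x (x + PP (m+1)) ⊆ AA + BB + Set.Icc 0 m} < 1 / 2 := by
  classical
  set P := PP (m + 1) with hP
  have hP9 : 9 ≤ P := nine_le_PP _
  set T : Set ℕ := {x : ℕ | Set.Icc x (x + P) ⊆ AA + BB + Set.Icc 0 m} with hT
  set f : ℕ → ℝ := fun n => (Set.ncard (T ∩ Set.Icc 1 n) : ℝ) / n with hf
  have hf0 : ∀ n, 0 ≤ f n := fun n => div_nonneg (by positivity) (by positivity)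
  have hbdd_ge : IsBoundedUnder (· ≥ ·) atTop f := Filter.isBoundedUnder_of ⟨0, hf0⟩
  set c₀ : ℝ := ((2 * P - 1 : ℕ) : ℝ) / ((4 * P : ℕ) : ℝ) with hc₀
  have hfreq : ∃ᶠ n in atTop, f n ≤ c₀ := by
    rw [Filter.frequently_atTop]
    intro a
    set y' := max a (m + 2) with hy'
    set j := Nat.pair m y' with hjd
    have hjy : y' ≤ j := Nat.right_le_pair _ _
    have hmu : mu j = m + 1 := by
      rw [mu, hjd, Nat.unpair_pair]
      simp only []
      have : m + 1 ≤ Nat.pair m y' := by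
        calc m + 1 ≤ y' := by omega
        _ ≤ Nat.pair m y' := Nat.right_le_pair _ _
      omega
    have hj1 : 1 ≤ j := by omega
    have hjm : m + 1 ≤ j := by omega
    refine ⟨rr j, ?_, ?_⟩
    · have h1 := j_lt_ll j
      have h2 := ll_lt_rr j
      omega
    · have hcount := claim3_count hj1 hmu hjm
      have hrpos : 0 < rr j := by
        have := j_lt_ll j; have := ll_lt_rr j; omega
      rw [hf]
      simp only []
      have hbr : (T ∩ Set.Icc 1 (rr j)).ncard
          = ((Finset.Icc 1 (rr j)).filter (fun x => x ∈ T)).card := ncard_bridge _ _ _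
      rw [hbr, hc₀, div_le_div_iff₀ (by positivity) (by positivity)]
      push_cast
      have : ((Finset.Icc 1 (rr j)).filter (fun x => x ∈ T)).card * (4 * P)
          ≤ (2 * P - 1) * rr j := by
        calc _ = 4 * P * ((Finset.Icc 1 (rr j)).filter (fun x => x ∈ T)).card := by ring
        _ ≤ (2 * P - 1) * rr j := hcount
      calc (((Finset.Icc 1 (rr j)).filter (fun x => x ∈ T)).card : ℝ) * ((4:ℝ) * P)
          = (((((Finset.Icc 1 (rr j)).filter (fun x => x ∈ T)).card * (4 * P) : ℕ)) : ℝ) := by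
            push_cast; ring
      _ ≤ (((2 * P - 1) * rr j : ℕ) : ℝ) := by exact_mod_cast this
      _ = ((2 * P - 1 : ℕ) : ℝ) * (rr j : ℝ) := by push_cast; ring
  have hlim : liminf f atTop ≤ c₀ := liminf_le_of_frequently_le hfreq hbdd_ge
  have hc12 : c₀ < 1 / 2 := by
    rw [hc₀, div_lt_iff₀ (by positivity)]
    have h1 : ((2 * P - 1 : ℕ) : ℝ) = 2 * (P:ℝ) - 1 := by
      have : (1:ℕ) ≤ 2 * P := by omega
      push_cast [this]
      ring
    rw [h1]
    push_cast
    linarith [show (9:ℝ) ≤ P by exact_mod_cast hP9]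
  rw [lowerDensityNat]
  calc liminf (fun n : ℕ => (Set.ncard (T ∩ Set.Icc 1 n) : ℝ) / n) atTop = liminf f atTop := rfl
  _ ≤ c₀ := hlim
  _ < 1 / 2 := hc12

theorem stmt_15 :
    ∃ A B : Set ℕ, lowerDensityNat A = 1 / 2 ∧ 8 / 9 ≤ banachDensityNat B ∧
      ∀ m : ℕ, ∃ k : ℕ,
        lowerDensityNat {x : ℕ | Set.Icc x (x + k) ⊆ A + B + Set.Icc 0 m} < 1 / 2 := by
  exact ⟨AA, BB, claim1, claim2, fun m => ⟨PP (m + 1), claim3 m⟩⟩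
end

section
/- There exists a set C ⊆ ℕ with lower density d_(C) > 0 such that lim_{i→∞} d_(C_{[i]}) = d_(C), yet C is not lower thick of level β for any β > 0; that is, for every β > 0 there exists k ∈ ℕ such that the lower density of {z ∈ ℕ : [z − k, z + k] ⊆ C} is strictly less than β. -/
open Filter

/-- The `n`-block set `A_{[n]} = {x ≥ 0 : [n·x, n·x + n - 1] ∩ A ≠ ∅}`. -/
def blockSetNat (A : Set ℕ) (n : ℕ) : Set ℕ :=
  {x : ℕ | ∃ y ∈ A, n * x ≤ y ∧ y ≤ n * x + n - 1}

section Aux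
open Finset


def nreg (t : ℕ) : ℕ := 4 ^ (t * t)
def midreg (t : ℕ) : ℕ := (nreg t + nreg (t + 1)) / 2
def idxreg (m : ℕ) : ℕ := Nat.sqrt (Nat.log 4 m)
def Cpred (m : ℕ) : Prop := if Even (idxreg m) then m % 2 = 0 else m < midreg (idxreg m)

instance : DecidablePred Cpred := fun m => by unfold Cpred; infer_instance

def cnt (n : ℕ) : ℕ := ((range n).filter Cpred).card

lemma nreg_pos (t : ℕ) : 0 < nreg t := Nat.pow_pos (by norm_num)

lemma nreg_lt (t : ℕ) : nreg t < nreg (t+1) :=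
  Nat.pow_lt_pow_right (by norm_num) (by nlinarith)

lemma nreg_mono : StrictMono nreg := strictMono_nat_of_lt_succ nreg_lt

lemma idx_mem {m : ℕ} (hm : 1 ≤ m) :
    nreg (idxreg m) ≤ m ∧ m < nreg (idxreg m + 1) := by
  set l := Nat.log 4 m with hl
  set t := Nat.sqrt l with ht
  have h1 : t * t ≤ l := by simpa [pow_two] using Nat.sqrt_le' l
  have h2 : l < (t+1) * (t+1) := by
    simpa [pow_two, Nat.succ_eq_add_one] using Nat.lt_succ_sqrt' l
  constructor
  · calc nreg t = 4 ^ (t*t) := rfl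
      _ ≤ 4 ^ l := Nat.pow_le_pow_right (by norm_num) h1
      _ ≤ m := Nat.pow_log_le_self 4 (by omega)
  · calc m < 4 ^ (l + 1) := Nat.lt_pow_succ_log_self (by norm_num) m
      _ ≤ 4 ^ ((t+1)*(t+1)) := Nat.pow_le_pow_right (by norm_num) (by omega)

lemma idx_eq {t m : ℕ} (h1 : nreg t ≤ m) (h2 : m < nreg (t+1)) : idxreg m = t := by
  have hm : 1 ≤ m := le_trans (nreg_pos t) h1
  obtain ⟨a1, a2⟩ := idx_mem hm
  rcases lt_trichotomy (idxreg m) t with h | h | h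
  · have : nreg (idxreg m + 1) ≤ nreg t := nreg_mono.le_iff_le.2 (by omega)
    omega
  · exact h
  · have : nreg (t + 1) ≤ nreg (idxreg m) := nreg_mono.le_iff_le.2 (by omega)
    omega

lemma idx_small {m : ℕ} (h : m < 4) : idxreg m = 0 := by
  have : Nat.log 4 m = 0 := Nat.log_of_lt h
  simp [idxreg, this]

lemma even_nreg {t : ℕ} (ht : 1 ≤ t) : nreg t % 2 = 0 := by
  have h2 : (2:ℕ) ∣ 4 ^ (t*t) := dvd_pow (by norm_num) (by nlinarith)
  show 4 ^ (t*t) % 2 = 0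
  omega

lemma two_midreg {t : ℕ} (ht : 1 ≤ t) : 2 * midreg t = nreg t + nreg (t+1) := by
  have e1 := even_nreg ht
  have e2 := even_nreg (t := t+1) (by omega)
  unfold midreg
  omega

lemma nreg_lt_mid {t : ℕ} (ht : 1 ≤ t) : nreg t < midreg t := by
  have := two_midreg ht
  have := nreg_lt t
  omega

lemma mid_lt_nreg {t : ℕ} (ht : 1 ≤ t) : midreg t < nreg (t+1) := by
  have := two_midreg ht
  have := nreg_lt t
  omega

lemma Cpred_iff_region {t m : ℕ} (h1 : nreg t ≤ m) (h2 : m < nreg (t+1)) :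
    Cpred m ↔ if Even t then m % 2 = 0 else m < midreg t := by
  unfold Cpred
  rw [idx_eq h1 h2]

section cnttools
variable (p : ℕ → Prop) [DecidablePred p]

lemma cnt_split {a b : ℕ} (h : a ≤ b) :
    ((range b).filter p).card
      = ((range a).filter p).card + ((Ico a b).filter p).card := by
  rw [range_eq_Ico, ← Finset.Ico_union_Ico_eq_Ico (Nat.zero_le a) h,
    filter_union, card_union_of_disjoint, range_eq_Ico]
  exact disjoint_filter_filter (p := p) (q := p) (Finset.Ico_disjoint_Ico_consecutive 0 a b)

end cnttools

lemma card_evens (n : ℕ) :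
    ((range n).filter (fun m => m % 2 = 0)).card = (n+1)/2 := by
  induction n with
  | zero => simp
  | succ n ih =>
    rw [Finset.range_add_one, filter_insert]
    by_cases h : n % 2 = 0
    · rw [if_pos h, card_insert_of_notMem (by simp)]
      omega
    · rw [if_neg h]
      omega

lemma card_evens_Ico {a b : ℕ} (h : a ≤ b) :
    ((Ico a b).filter (fun m => m % 2 = 0)).card = (b+1)/2 - (a+1)/2 := by
  have := cnt_split (fun m => m % 2 = 0) h
  rw [card_evens, card_evens] at this
  omega

lemma cnt_flat {t n : ℕ} (hte : Even t) (h1 : nreg t ≤ n) (h2 : n ≤ nreg (t+1)) :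
    ((Ico (nreg t) n).filter Cpred).card = (n+1)/2 - (nreg t + 1)/2 := by
  have hc : (Ico (nreg t) n).filter Cpred
      = (Ico (nreg t) n).filter (fun m => m % 2 = 0) := by
    apply filter_congr
    intro m hm
    rw [mem_Ico] at hm
    rw [Cpred_iff_region hm.1 (lt_of_lt_of_le hm.2 h2), if_pos hte]
  rw [hc, card_evens_Ico h1]

lemma cnt_interval {t n : ℕ} (hto : ¬ Even t) (h1 : nreg t ≤ n) (h2 : n ≤ nreg (t+1)) :
    ((Ico (nreg t) n).filter Cpred).card = min n (midreg t) - nreg t := by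
  have hc : (Ico (nreg t) n).filter Cpred
      = (Ico (nreg t) n).filter (· < midreg t) := by
    apply filter_congr
    intro m hm
    rw [mem_Ico] at hm
    rw [Cpred_iff_region hm.1 (lt_of_lt_of_le hm.2 h2), if_neg hto]
  rw [hc]
  rcases le_total n (midreg t) with h | h
  · rw [Finset.Ico_filter_lt_of_right_le h, Nat.card_Ico]
    omega
  · rw [Finset.Ico_filter_lt_of_le_right h, Nat.card_Ico]
    omega

lemma cnt_small {n : ℕ} (h : n ≤ 4) : cnt n = (n+1)/2 := by
  unfold cnt
  have hc : (range n).filter Cpred = (range n).filter (fun m => m % 2 = 0) := by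
    apply filter_congr
    intro m hm
    rw [mem_range] at hm
    unfold Cpred
    rw [idx_small (by omega)]
    simp
  rw [hc, card_evens]

lemma nreg_one : nreg 1 = 4 := by norm_num [nreg]

lemma cnt_nreg : ∀ t, 1 ≤ t → 2 * cnt (nreg t) = nreg t := by
  intro t ht
  induction t with
  | zero => omega
  | succ t ih =>
    rcases Nat.lt_or_ge t 1 with h | h
    · have ht0 : t = 0 := by omega
      subst ht0
      rw [nreg_one, cnt_small (by norm_num)]
    · have e : cnt (nreg (t+1)) = cnt (nreg t) + ((Ico (nreg t) (nreg (t+1))).filter Cpred).card :=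
        cnt_split Cpred (le_of_lt (nreg_lt t))
      by_cases hte : Even t
      · rw [cnt_flat hte (le_of_lt (nreg_lt t)) le_rfl] at e
        have e1 := even_nreg h
        have e2 := even_nreg (t := t+1) (by omega)
        have := ih h
        have := nreg_lt t
        omega
      · rw [cnt_interval hte (le_of_lt (nreg_lt t)) le_rfl] at e
        have := two_midreg h
        have := ih h
        have := nreg_lt t
        omega

lemma cnt_lower : ∀ n, n ≤ 2 * cnt n := by
  intro n
  rcases le_or_gt n 4 with h | h
  · rw [cnt_small h]; omega
  · have hm : 1 ≤ n := by omega
    obtain ⟨a1, a2⟩ := idx_mem hm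
    set t := idxreg n with htdef
    have ht1 : 1 ≤ t := by
      by_contra hc
      have ht0 : t = 0 := by omega
      rw [ht0, nreg_one] at a2
      omega
    have e : cnt n = cnt (nreg t) + ((Ico (nreg t) n).filter Cpred).card :=
      cnt_split Cpred a1
    have hcn := cnt_nreg t ht1
    by_cases hte : Even t
    · rw [cnt_flat hte a1 (le_of_lt a2)] at e
      have e1 := even_nreg ht1
      omega
    · rw [cnt_interval hte a1 (le_of_lt a2)] at e
      have := two_midreg ht1
      omega


open Classical in
lemma ncard_inter_Icc (A : Set ℕ) (n : ℕ) :
    (A ∩ Set.Icc 1 n).ncard = ((Finset.Icc 1 n).filter (· ∈ A)).card := by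
  classical
  rw [← Set.ncard_coe_finset]
  congr 1
  ext x
  simp only [Set.mem_inter_iff, Finset.coe_filter, Finset.mem_Icc, Set.mem_setOf_eq,
    Set.mem_Icc]
  tauto

lemma ncard_inter_le (A : Set ℕ) (n : ℕ) : (A ∩ Set.Icc 1 n).ncard ≤ n := by
  classical
  rw [ncard_inter_Icc]
  calc ((Finset.Icc 1 n).filter (· ∈ A)).card ≤ (Finset.Icc 1 n).card :=
        Finset.card_filter_le _ _
    _ = n := by rw [Nat.card_Icc]; omega

lemma dens_nonneg (A : Set ℕ) (n : ℕ) : 0 ≤ (Set.ncard (A ∩ Set.Icc 1 n) : ℝ) / n := by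
  positivity

lemma dens_le_one (A : Set ℕ) (n : ℕ) : (Set.ncard (A ∩ Set.Icc 1 n) : ℝ) / n ≤ 1 := by
  rcases Nat.eq_zero_or_pos n with h | h
  · simp [h]
  · rw [div_le_one (by positivity)]
    exact_mod_cast ncard_inter_le A n

lemma liminf_eq_of_bounds {f : ℕ → ℝ} {L : ℝ} (h0 : ∀ n, 0 ≤ f n) (hub : ∀ n, f n ≤ 1)
    (h1 : ∀ ε : ℝ, 0 < ε → ∀ᶠ n in atTop, L - ε ≤ f n)
    (h2 : ∀ ε : ℝ, 0 < ε → ∃ᶠ n in atTop, f n ≤ L + ε) :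
    liminf f atTop = L := by
  have hbdd : IsBoundedUnder (· ≥ ·) atTop f :=
    ⟨0, eventually_map.2 (Eventually.of_forall h0)⟩
  have hcob : IsCoboundedUnder (· ≥ ·) atTop f :=
    IsBoundedUnder.isCoboundedUnder_ge ⟨1, eventually_map.2 (Eventually.of_forall hub)⟩
  apply le_antisymm
  · apply le_of_forall_pos_le_add
    intro ε hε
    exact liminf_le_of_frequently_le (h2 ε hε) hbdd
  · apply le_of_forall_pos_le_add
    intro ε hε
    have := le_liminf_of_le hcob (h1 ε hε)
    linarith

lemma one_div_eventually (ε : ℝ) (hε : 0 < ε) : ∀ᶠ n : ℕ in atTop, (1 : ℝ) / n ≤ ε := by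
  have := tendsto_one_div_atTop_nhds_zero_nat (𝕜 := ℝ)
  filter_upwards [this.eventually (eventually_le_nhds hε)] with n hn using hn

def Cset : Set ℕ := {m | Cpred m}

lemma Cpred_zero : Cpred 0 := by
  unfold Cpred
  rw [idx_small (by norm_num)]
  simp

lemma Cpred_nreg {t : ℕ} (ht : 1 ≤ t) : Cpred (nreg t) := by
  rw [Cpred_iff_region le_rfl (nreg_lt t)]
  by_cases hte : Even t
  · rw [if_pos hte]; exact even_nreg ht
  · rw [if_neg hte]; exact nreg_lt_mid ht

lemma cntIcc_eq (n : ℕ) :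
    ((Finset.Icc 1 n).filter (fun m => Cpred m)).card + 1 = cnt (n+1) := by
  have hr : range (n+1) = insert 0 (Finset.Icc 1 n) := by
    ext x
    simp only [mem_range, mem_insert, Finset.mem_Icc]
    omega
  unfold cnt
  rw [hr, filter_insert, if_pos Cpred_zero,
    card_insert_of_notMem (by simp)]

lemma ncard_Cset (n : ℕ) : (Cset ∩ Set.Icc 1 n).ncard + 1 = cnt (n+1) := by
  classical
  rw [ncard_inter_Icc, ← cntIcc_eq n]
  congr 2
  exact filter_congr (fun m _ => Iff.rfl)

lemma cnt_nreg_succ {t : ℕ} (ht : 1 ≤ t) : cnt (nreg t + 1) = cnt (nreg t) + 1 := by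
  have e : cnt (nreg t + 1) = cnt (nreg t) + ((Ico (nreg t) (nreg t + 1)).filter Cpred).card :=
    cnt_split Cpred (by omega)
  rw [e, Nat.Ico_succ_singleton, filter_singleton, if_pos (Cpred_nreg ht)]
  simp

lemma claimA : lowerDensityNat Cset = 1/2 := by
  unfold lowerDensityNat
  apply liminf_eq_of_bounds (fun n => dens_nonneg _ n) (fun n => dens_le_one _ n)
  · intro ε hε
    filter_upwards [one_div_eventually ε hε, eventually_ge_atTop 1] with n h1n hn1
    have hc := ncard_Cset n
    have hl := cnt_lower (n+1)
    have hn0 : (0:ℝ) < n := by exact_mod_cast hn1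
    have hnat : n ≤ 2 * (Cset ∩ Set.Icc 1 n).ncard + 1 := by
      have := cnt_lower (n+1); omega
    have hcard : ((n:ℝ) - 1)/2 ≤ ((Cset ∩ Set.Icc 1 n).ncard : ℝ) := by
      have := (Nat.cast_le (α := ℝ)).2 hnat
      push_cast at this
      linarith
    calc (1:ℝ)/2 - ε ≤ ((n:ℝ) - 1)/2 / n := by
          have hen : (1:ℝ) ≤ ε * n := by
            rw [div_le_iff₀ hn0] at h1n
            linarith
          rw [div_div, le_div_iff₀ (by positivity)]
          nlinarith
      _ ≤ ((Cset ∩ Set.Icc 1 n).ncard : ℝ) / n := by gcongr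
  · intro ε hε
    rw [frequently_atTop]
    intro M
    refine ⟨nreg (M+1), le_trans ?_ (nreg_mono.le_apply), ?_⟩
    · omega
    · set t := M + 1
      have ht : 1 ≤ t := by omega
      have hc := ncard_Cset (nreg t)
      rw [cnt_nreg_succ ht] at hc
      have h2 : 2 * cnt (nreg t) = nreg t := cnt_nreg t ht
      have hnat2 : 2 * (Cset ∩ Set.Icc 1 (nreg t)).ncard = nreg t := by omega
      have hcard : ((Cset ∩ Set.Icc 1 (nreg t)).ncard : ℝ) * 2 = (nreg t : ℝ) := by
        have := congrArg (Nat.cast : ℕ → ℝ) hnat2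
        push_cast at this
        linarith
      have hnp : (0:ℝ) < (nreg t : ℝ) := by exact_mod_cast nreg_pos t
      rw [div_le_iff₀ hnp]
      nlinarith
def Dset : Set ℕ :=
  {z : ℕ | Set.Icc ((z : ℤ) - (1:ℕ)) ((z : ℤ) + (1:ℕ)) ⊆ (fun c : ℕ => (c : ℤ)) '' Cset}

lemma not_in_D {t z : ℕ} (hte : Even t) (h1 : nreg t ≤ z) (h2 : z < nreg (t+1)) :
    z ∉ Dset := by
  intro hz
  set w := 2 * (z / 2) + 1 with hw
  have hwz : z ≤ w ∧ w ≤ z + 1 := by omega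
  have hmem : ((w:ℕ) : ℤ) ∈ Set.Icc ((z : ℤ) - (1:ℕ)) ((z : ℤ) + (1:ℕ)) := by
    simp only [Set.mem_Icc]
    push_cast
    omega
  obtain ⟨c, hcC, hcw⟩ := hz hmem
  have hcwn : c = w := by
    have : ((c:ℕ):ℤ) = ((w:ℕ):ℤ) := hcw
    exact_mod_cast this
  subst hcwn
  have hwodd : w % 2 = 1 := by omega
  have hwlb : nreg t ≤ w := le_trans h1 hwz.1
  have hwub : w ≤ nreg (t+1) := le_trans hwz.2 h2
  rcases lt_or_eq_of_le hwub with h | h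
  · have := (Cpred_iff_region hwlb h).1 hcC
    rw [if_pos hte] at this
    omega
  · have := even_nreg (t := t+1) (by omega)
    omega

lemma ratio_bound {t : ℕ} : (nreg t + 1) * (t + 1) ≤ nreg (t+1) := by
  have h1 : t + 1 ≤ 4 ^ t := Nat.lt_pow_self (by norm_num)
  have h2 : (4:ℕ) ^ t ≤ 4 ^ (2*t) := Nat.pow_le_pow_right (by norm_num) (by omega)
  have h3 : 2 * (t + 1) ≤ 4 ^ (2*t+1) := by
    calc 2 * (t+1) ≤ 2 * 4 ^ (2*t) := by
          have := le_trans h1 h2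
          omega
      _ ≤ 4 * 4 ^ (2*t) := by omega
      _ = 4 ^ (2*t+1) := by ring
  have h4 : nreg t + 1 ≤ 2 * nreg t := by have := nreg_pos t; omega
  have h5 : nreg (t+1) = nreg t * 4 ^ (2*t+1) := by
    unfold nreg
    rw [← pow_add]
    ring_nf
  calc (nreg t + 1) * (t+1) ≤ 2 * nreg t * (t+1) := by
        exact Nat.mul_le_mul_right _ h4
    _ = nreg t * (2 * (t+1)) := by ring
    _ ≤ nreg t * 4 ^ (2*t+1) := Nat.mul_le_mul_left _ h3
    _ = nreg (t+1) := h5.symm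

lemma claimC : lowerDensityNat Dset = 0 := by
  unfold lowerDensityNat
  apply liminf_eq_of_bounds (fun n => dens_nonneg _ n) (fun n => dens_le_one _ n)
  · intro ε hε
    filter_upwards with n
    have := dens_nonneg Dset n
    linarith
  · intro ε hε
    rw [frequently_atTop]
    intro M
    set K := ⌈ε⁻¹⌉₊ with hK
    set t := 2 * (M + K + 1) with ht
    have hte : Even t := by exact ⟨M + K + 1, by omega⟩
    refine ⟨nreg (t+1), ?_, ?_⟩
    · calc M ≤ t + 1 := by omega
        _ ≤ nreg (t+1) := nreg_mono.le_apply
    · set n := nreg (t+1) with hn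
      have hsub : Dset ∩ Set.Icc 1 n ⊆ Set.Icc 1 (nreg t) ∪ {n} := by
        rintro z ⟨hzD, hz1, hzn⟩
        rcases lt_or_ge z (nreg t) with h | h
        · exact Or.inl ⟨hz1, le_of_lt h⟩
        · rcases lt_or_eq_of_le hzn with h2 | h2
          · exact absurd hzD (not_in_D hte h h2)
          · exact Or.inr h2
      have hfin : (Set.Icc 1 (nreg t) ∪ {n} : Set ℕ).Finite :=
        (Set.finite_Icc _ _).union (Set.finite_singleton _)
      have hcount : (Dset ∩ Set.Icc 1 n).ncard ≤ nreg t + 1 := by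
        calc (Dset ∩ Set.Icc 1 n).ncard ≤ (Set.Icc 1 (nreg t) ∪ {n} : Set ℕ).ncard :=
              Set.ncard_le_ncard hsub hfin
          _ ≤ (Set.Icc 1 (nreg t) : Set ℕ).ncard + ({n} : Set ℕ).ncard :=
              Set.ncard_union_le _ _
          _ = nreg t + 1 := by
              rw [Set.ncard_singleton]
              congr 1
              rw [← Finset.coe_Icc, Set.ncard_coe_finset, Nat.card_Icc]
              omega
      have hnp : (0:ℝ) < (n : ℝ) := by exact_mod_cast nreg_pos (t+1)
      have hrb : ((nreg t : ℝ) + 1) * (t + 1) ≤ (n : ℝ) := by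
        exact_mod_cast ratio_bound
      have hKε : (1:ℝ) ≤ ε * (t + 1) := by
        have h1 : (ε:ℝ)⁻¹ ≤ K := Nat.le_ceil _
        have h2 : (K:ℝ) ≤ t + 1 := by
          have : K ≤ t + 1 := by omega
          exact_mod_cast this
        have := le_trans h1 h2
        rw [inv_le_iff_one_le_mul₀ hε] at this  -- maybe wrong name
        linarith [this]
      rw [div_le_iff₀ hnp, zero_add]
      have hp1 : (0:ℝ) < (t:ℝ) + 1 := by positivity
      have hnn : ((Dset ∩ Set.Icc 1 n).ncard : ℝ) ≤ (nreg t : ℝ) + 1 := by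
        exact_mod_cast hcount
      calc ((Dset ∩ Set.Icc 1 n).ncard : ℝ) ≤ (nreg t : ℝ) + 1 := hnn
        _ ≤ ε * (((nreg t : ℝ) + 1) * (t+1)) := by nlinarith
        _ ≤ ε * n := by nlinarith


lemma cnt_le_self (n : ℕ) : cnt n ≤ n := by
  calc cnt n ≤ (range n).card := Finset.card_filter_le _ _
    _ = n := Finset.card_range n

open Classical in
lemma block_lower {i m : ℕ} (hi : 1 ≤ i) :
    i * m ≤ 2 * i * ((Finset.Icc 1 m).filter (· ∈ blockSetNat Cset i)).card + 3 * i := by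
  classical
  have hpos : 0 < i := hi
  set s := (Finset.Ico i (i*(m+1))).filter Cpred with hs
  set tt := (Finset.Icc 1 m).filter (· ∈ blockSetNat Cset i) with htt
  have hmap : ∀ y ∈ s, y / i ∈ tt := by
    intro y hy
    rw [hs, mem_filter, mem_Ico] at hy
    obtain ⟨⟨hyi, hylt⟩, hyC⟩ := hy
    rw [htt, mem_filter, Finset.mem_Icc]
    have hq1 : 1 ≤ y / i := (Nat.one_le_div_iff hpos).2 hyi
    have hq2 : y / i < m + 1 := (Nat.div_lt_iff_lt_mul hpos).2 (by
      calc y < i * (m+1) := hylt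
        _ = (m+1) * i := by ring)
    have hle : i * (y / i) ≤ y := by
      calc i * (y / i) = y / i * i := by ring
        _ ≤ y := Nat.div_mul_le_self y i
    have hub : y ≤ i * (y / i) + i - 1 := by
      have hdm := Nat.div_add_mod y i
      have hmod : y % i < i := Nat.mod_lt y hpos
      set A := i * (y / i) with hA
      omega
    exact ⟨⟨hq1, by omega⟩, ⟨y, hyC, hle, hub⟩⟩
  have hfib : ∀ b ∈ tt, (s.filter (fun y => y / i = b)).card ≤ i := by
    intro b _
    have hsub : s.filter (fun y => y / i = b) ⊆ Finset.Ico (i*b) (i*b + i) := by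
      intro y hy
      rw [mem_filter] at hy
      obtain ⟨_, hyb⟩ := hy
      rw [mem_Ico, ← hyb]
      have hdm := Nat.div_add_mod y i
      have hmod : y % i < i := Nat.mod_lt y hpos
      set A := i * (y / i) with hA
      omega
    calc (s.filter (fun y => y / i = b)).card ≤ (Finset.Ico (i*b) (i*b + i)).card :=
          Finset.card_le_card hsub
      _ = i := by rw [Nat.card_Ico]; simp
  have hcard : s.card ≤ i * tt.card :=
    Finset.card_le_mul_card_image_of_maps_to hmap i hfib
  have hsplit : cnt (i*(m+1)) = cnt i + s.card := cnt_split Cpred (by nlinarith)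
  have hcl := cnt_lower (i*(m+1))
  have hci : cnt i ≤ i := cnt_le_self i
  have hexp : i * (m+1) = i * m + i := by ring
  have hitc : 2 * i * tt.card = 2 * (i * tt.card) := by ring
  omega

lemma claimB {i : ℕ} (hi : 1 ≤ i) : lowerDensityNat (blockSetNat Cset i) = 1/2 := by
  classical
  unfold lowerDensityNat
  apply liminf_eq_of_bounds (fun n => dens_nonneg _ n) (fun n => dens_le_one _ n)
  · -- lower bound, eventually
    intro ε hε
    filter_upwards [one_div_eventually (ε/2) (by linarith), eventually_ge_atTop 3]
      with m h1m hm3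
    have hnc := ncard_inter_Icc (blockSetNat Cset i) m
    have hbl := block_lower (m := m) hi
    set c := ((Finset.Icc 1 m).filter (· ∈ blockSetNat Cset i)).card with hc
    have hmc : m ≤ 2 * c + 3 := by
      have h2 : i * m ≤ i * (2 * c + 3) := by
        calc i * m ≤ 2 * i * c + 3 * i := hbl
          _ = i * (2 * c + 3) := by ring
      exact Nat.le_of_mul_le_mul_left h2 hi
    have hm0 : (0:ℝ) < m := by
      have : (3:ℝ) ≤ m := by exact_mod_cast hm3
      linarith
    have hcard : ((m:ℝ) - 3)/2 ≤ (c : ℝ) := by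
      have := (Nat.cast_le (α := ℝ)).2 hmc
      push_cast at this
      linarith
    rw [hnc]
    calc (1:ℝ)/2 - ε ≤ ((m:ℝ) - 3)/2 / m := by
          have hem : (2:ℝ) ≤ ε * m := by
            rw [div_le_iff₀ hm0] at h1m
            linarith
          rw [div_div, le_div_iff₀ (by positivity)]
          nlinarith
      _ ≤ (c : ℝ) / m := by gcongr
  · -- upper bound, frequently
    intro ε hε
    set δ := min ε (1/2 : ℝ) with hδdef
    have hδ : 0 < δ := lt_min hε (by norm_num)
    have hδ2 : δ ≤ 1/2 := min_le_right _ _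
    have hδε : δ ≤ ε := min_le_left _ _
    rw [frequently_atTop]
    intro M
    set K := ⌈δ⁻¹⌉₊ with hK
    set t := 2 * (M + 5*K + i) + 1 with ht
    have hto : ¬ Even t := by
      simp [ht, Nat.even_add_one, parity_simps]
    have ht1 : 1 ≤ t := by omega
    have hti : i ≤ t := by omega
    set n := nreg (t+1) with hn
    have hpos : 0 < i := hi
    have hrb : (nreg t + 1) * (t + 1) ≤ n := ratio_bound
    have htn : t ≤ nreg t := nreg_mono.le_apply
    have hin : i * (t+1) ≤ n := by
      calc i * (t+1) ≤ (nreg t + 1) * (t+1) := by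
            apply Nat.mul_le_mul_right
            omega
        _ ≤ n := hrb
    set q := n / i with hq
    have hq1 : t + 1 ≤ q := by
      rw [hq]
      rw [Nat.le_div_iff_mul_le hpos]
      calc (t+1) * i = i * (t+1) := by ring
        _ ≤ n := hin
    set m := q - 1 with hm
    clear_value q m
    refine ⟨m, by omega, ?_⟩
    -- counting: blocks up to m that meet C are ≤ midreg t / i
    have hsub : (Finset.Icc 1 m).filter (· ∈ blockSetNat Cset i)
        ⊆ Finset.Icc 1 (midreg t / i) := by
      intro x hx
      rw [mem_filter, Finset.mem_Icc] at hx
      obtain ⟨⟨hx1, hxm⟩, y, hyC, hxy1, hxy2⟩ := hx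
      have hylt : y < n := by
        have h1 : i * x + i - 1 ≤ i * m + i - 1 := by
          have : i * x ≤ i * m := Nat.mul_le_mul_left _ hxm
          omega
        have h2 : i * m + i ≤ i * q := by
          have : i * q = i * m + i := by
            have : q = m + 1 := by omega
            rw [this]; ring
          omega
        have h3 : i * q ≤ n := by
          rw [hq]
          calc i * (n / i) = n / i * i := by ring
            _ ≤ n := Nat.div_mul_le_self n i
        omega
      have hymid : y < midreg t := by
        rcases lt_or_ge y (nreg t) with h | h
        · exact lt_trans h (nreg_lt_mid ht1)
        · have := (Cpred_iff_region h hylt).1 hyC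
          rwa [if_neg hto] at this
      have hxq : x ≤ midreg t / i := by
        rw [Nat.le_div_iff_mul_le hpos]
        calc x * i = i * x := by ring
          _ ≤ y := hxy1
          _ ≤ midreg t := le_of_lt hymid
      rw [Finset.mem_Icc]
      exact ⟨hx1, hxq⟩
    have hcount : ((Finset.Icc 1 m).filter (· ∈ blockSetNat Cset i)).card ≤ midreg t / i := by
      calc _ ≤ (Finset.Icc 1 (midreg t / i)).card := Finset.card_le_card hsub
        _ = midreg t / i := by rw [Nat.card_Icc, Nat.add_sub_cancel]
    -- now the real estimate
    have hnc := ncard_inter_Icc (blockSetNat Cset i) m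
    set c := ((Finset.Icc 1 m).filter (· ∈ blockSetNat Cset i)).card with hc
    -- real variables
    have hm1 : 1 ≤ m := by omega
    have hm0 : (0:ℝ) < (m:ℝ) := by exact_mod_cast Nat.lt_of_lt_of_le Nat.zero_lt_one hm1
    rw [hnc, div_le_iff₀ hm0]
    have hcc : (c:ℝ) ≤ ((midreg t / i : ℕ) : ℝ) := by exact_mod_cast hcount
    have hqi : ((midreg t / i : ℕ) : ℝ) * i ≤ (midreg t : ℝ) := by
      exact_mod_cast Nat.div_mul_le_self (midreg t) i
    have h2mid : 2 * (midreg t : ℝ) = (nreg t : ℝ) + (n : ℝ) := by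
      exact_mod_cast two_midreg ht1
    -- m * i ≥ n - 2i
    have hmi : (n:ℝ) - 2*i ≤ (m:ℝ) * i := by
      have hdm : i * q + n % i = n := by rw [hq]; exact Nat.div_add_mod n i
      have hmod : n % i < i := Nat.mod_lt n hpos
      have hmq : m + 1 = q := by omega
      have : i * (m + 1) + n % i = n := by rw [hmq]; exact hdm
      have hcast := congrArg (Nat.cast : ℕ → ℝ) this
      push_cast at hcast
      have hmodr : ((n % i : ℕ) : ℝ) ≤ (i:ℝ) := by exact_mod_cast hmod.le
      ring_nf at hcast ⊢
      linarith
    -- n is big: 5 * nreg t ≤ 2 δ n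
    have hKd : (δ:ℝ)⁻¹ ≤ (K:ℝ) := Nat.le_ceil _
    have h5K : (5*K : ℝ) ≤ (t:ℝ) + 1 := by
      have : 5*K ≤ t + 1 := by omega
      exact_mod_cast this
    have hδt : 5 ≤ δ * ((t:ℝ)+1) := by
      have h1 : 1 ≤ δ * K := by
        have := mul_le_mul_of_nonneg_left hKd hδ.le
        rwa [mul_inv_cancel₀ hδ.ne'] at this
      have h2 : δ * (5*(K:ℝ)) ≤ δ * ((t:ℝ)+1) :=
        mul_le_mul_of_nonneg_left h5K hδ.le
      have h3 : δ * (5*(K:ℝ)) = 5 * (δ * K) := by ring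
      linarith
    have hrbr : ((nreg t : ℝ) + 1) * ((t:ℝ)+1) ≤ (n:ℝ) := by exact_mod_cast hrb
    have hnr0 : (0:ℝ) < (nreg t : ℝ) := by exact_mod_cast nreg_pos t
    have hbig : 5 * (nreg t : ℝ) ≤ 2 * (δ * n) := by
      have ht0 : (0:ℝ) ≤ (t:ℝ) + 1 := by positivity
      have h1 : (nreg t : ℝ) * ((t:ℝ)+1) ≤ n := by
        have : (nreg t : ℝ) * ((t:ℝ)+1) ≤ ((nreg t : ℝ) + 1) * ((t:ℝ)+1) := by
          apply mul_le_mul_of_nonneg_right _ ht0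
          linarith
        linarith
      have h2 : δ * ((nreg t : ℝ) * ((t:ℝ)+1)) ≤ δ * n :=
        mul_le_mul_of_nonneg_left h1 hδ.le
      have h3 : (nreg t : ℝ) * 5 ≤ (nreg t : ℝ) * (δ * ((t:ℝ)+1)) :=
        mul_le_mul_of_nonneg_left hδt hnr0.le
      have h4 : (nreg t : ℝ) * (δ * ((t:ℝ)+1)) = δ * ((nreg t : ℝ) * ((t:ℝ)+1)) := by ring
      linarith
    have hir : (i:ℝ) ≤ (nreg t : ℝ) := by
      have : i ≤ nreg t := le_trans hti htn
      exact_mod_cast this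
    have hi1 : (1:ℝ) ≤ (i:ℝ) := by exact_mod_cast hi
    -- final chain
    have hfin : (c:ℝ) * i ≤ (1/2 + δ) * ((m:ℝ) * i) := by
      have hii0 : (0:ℝ) ≤ (i:ℝ) := by linarith
      have e1 : (c:ℝ) * i ≤ ((nreg t : ℝ) + n)/2 := by
        have := mul_le_mul_of_nonneg_right hcc hii0
        linarith
      have e2 : ((nreg t : ℝ) + n)/2 ≤ (1/2 + δ) * ((n:ℝ) - 2*i) := by
        have p1 : δ * (i:ℝ) ≤ (1/2) * i := mul_le_mul_of_nonneg_right hδ2 hii0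
        have expand : (1/2 + δ) * ((n:ℝ) - 2*i) = (n:ℝ)/2 - i + δ*n - 2*(δ*i) := by ring
        rw [expand]
        linarith
      have e3 : (1/2 + δ) * ((n:ℝ) - 2*i) ≤ (1/2 + δ) * ((m:ℝ) * i) :=
        mul_le_mul_of_nonneg_left hmi (by linarith)
      linarith
    have hii0 : (0:ℝ) < (i:ℝ) := by linarith
    have := (mul_le_mul_iff_of_pos_right hii0).1 (by
      calc (c:ℝ) * i ≤ (1/2 + δ) * (m * i) := hfin
        _ = ((1/2 + δ) * m) * i := by ring)
    calc (c:ℝ) ≤ (1/2 + δ) * m := this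
      _ ≤ (1/2 + ε) * m := by
          apply mul_le_mul_of_nonneg_right _ hm0.le
          linarith

end Aux

theorem stmt_18 :
    ∃ C : Set ℕ, 0 < lowerDensityNat C ∧
      Tendsto (fun i : ℕ => lowerDensityNat (blockSetNat C i)) atTop
        (nhds (lowerDensityNat C)) ∧
      ∀ β : ℝ, 0 < β → ∃ k : ℕ,
        lowerDensityNat {z : ℕ |
          Set.Icc ((z : ℤ) - k) ((z : ℤ) + k) ⊆ (fun c : ℕ => (c : ℤ)) '' C} < β := by
  classical
  refine ⟨Cset, ?_, ?_, ?_⟩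
  · rw [claimA]; norm_num
  · rw [claimA]
    have hev : (fun _ : ℕ => (1:ℝ)/2) =ᶠ[atTop]
        fun i => lowerDensityNat (blockSetNat Cset i) := by
      filter_upwards [eventually_ge_atTop 1] with i hi
      exact (claimB hi).symm
    exact Tendsto.congr' hev tendsto_const_nhds
  · intro β hβ
    refine ⟨1, ?_⟩
    have he : {z : ℕ | Set.Icc ((z : ℤ) - (1:ℕ)) ((z : ℤ) + (1:ℕ))
        ⊆ (fun c : ℕ => (c : ℤ)) '' Cset} = Dset := rfl
    rw [he, claimC]
    exact hβ
end
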